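/- Let H be a complex Hilbert space and let P₀, S ∈ Σ⁺(H). Define P(t) = (I + tP₀S)⁻¹P₀ for t ≥ 0. Then P(0) = P₀ and for every t ≥ 0 the map P : [0, ∞) → ℒ(H) is differentiable at t (in the operator norm), with derivative P'(t) = −P(t) S P(t). That is, P solves the operator-valued differential equation Ṗ = −PSP with initial condition P(0) = P₀. -/

import Mathlib

set_option maxHeartbeats 1000000
set_option synthInstance.maxHeartbeats 400000

/-- In a C⋆-algebra-like setting: if `a, b ≥ 0` then `1 + a * b` is a unit. -/
lemma isUnit_one_add_mul_of_nonneg {H : Type*} [NormedAddCommGroup H] [InnerProductSpace ℂ H]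
    [CompleteSpace H] (a b : H →L[ℂ] H) (ha : 0 ≤ a) (hb : 0 ≤ b) :
    IsUnit (1 + a * b) := by
  set s := CFC.sqrt a with hs
  have hss : s * s = a := CFC.sqrt_mul_sqrt_self a ha
  have hsa : IsSelfAdjoint s := IsSelfAdjoint.of_nonneg (CFC.sqrt_nonneg a)
  have hconj : 0 ≤ s * b * s := by
    have := star_left_conjugate_nonneg hb s
    rwa [hsa.star_eq] at this
  have hmem : (-1 : ℝ) ∉ spectrum ℝ (a * b) := by
    intro hmemab
    have h1 : (-1 : ℝ) ∈ spectrum ℝ (a * b) \ {0} := ⟨hmemab, by norm_num⟩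
    rw [← hss, mul_assoc, spectrum.nonzero_mul_comm] at h1
    exact absurd (spectrum_nonneg_of_nonneg hconj h1.1) (by norm_num)
  rw [spectrum.notMem_iff] at hmem
  have : (algebraMap ℝ (H →L[ℂ] H)) (-1) - a * b = -(1 + a * b) := by
    simp [sub_eq_add_neg, add_comm]
  rw [this, IsUnit.neg_iff] at hmem
  exact hmem

/-- For positive operators `P₀, S` on a complex Hilbert space, the map
`P(t) = (I + tP₀S)⁻¹P₀` satisfies `P(0) = P₀` and is differentiable on `[0, ∞)` (in operator
norm) with `P'(t) = −P(t) S P(t)`; i.e. it solves `Ṗ = −PSP`, `P(0) = P₀`. -/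
theorem stmt_4 {H : Type*} [NormedAddCommGroup H] [InnerProductSpace ℂ H] [CompleteSpace H]
    (P₀ S : H →L[ℂ] H) (hP₀ : P₀.IsPositive) (hS : S.IsPositive)
    (P : ℝ → H →L[ℂ] H) (hP : ∀ t : ℝ, P t = Ring.inverse (1 + t • (P₀ * S)) * P₀) :
    P 0 = P₀ ∧
      ∀ t : ℝ, 0 ≤ t → HasDerivWithinAt P (-(P t * S * P t)) (Set.Ici 0) t := by
  set A := P₀ * S with hA
  constructor
  · rw [hP 0]; simp
  · intro t ht
    -- `t • P₀` is positive
    have htP₀ : (0 : H →L[ℂ] H) ≤ t • P₀ := by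
      rw [ContinuousLinearMap.nonneg_iff_isPositive]
      constructor
      · rw [← ContinuousLinearMap.isSelfAdjoint_iff_isSymmetric, isSelfAdjoint_iff, star_smul, star_trivial, hP₀.isSelfAdjoint.star_eq]
      · intro x
        have h := hP₀.2 x
        simp only [ContinuousLinearMap.reApplyInnerSelf, ContinuousLinearMap.smul_apply,
          RCLike.real_smul_eq_coe_smul (K := ℂ), inner_smul_left, Complex.conj_ofReal,
          Complex.mul_re, Complex.ofReal_re, Complex.ofReal_im] at *
        simpa using mul_nonneg ht h
    have hSnn : (0 : H →L[ℂ] H) ≤ S := (ContinuousLinearMap.nonneg_iff_isPositive S).mpr hS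
    have hUnit : IsUnit (1 + t • A) := by
      have := isUnit_one_add_mul_of_nonneg (t • P₀) S htP₀ hSnn
      rwa [smul_mul_assoc, ← hA] at this
    obtain ⟨u, hu⟩ := hUnit
    have hPe : P = fun s : ℝ => Ring.inverse (1 + s • A) * P₀ := funext hP
    -- derivative of the affine map
    have h1 : HasDerivAt (fun s : ℝ => 1 + s • A) A t := by
      simpa using ((hasDerivAt_id t).smul_const A).const_add (1 : H →L[ℂ] H)
    have h2 : HasFDerivAt Ring.inverse
        (-ContinuousLinearMap.mulLeftRight ℝ (H →L[ℂ] H) ↑u⁻¹ ↑u⁻¹) (1 + t • A) := by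
      simpa [hu] using hasFDerivAt_ringInverse (𝕜 := ℝ) u
    have h3 := h2.comp_hasDerivAt t h1
    have h4 := h3.mul_const P₀
    have hinv : Ring.inverse (1 + t • A) = (↑u⁻¹ : H →L[ℂ] H) := by
      rw [← hu, Ring.inverse_unit]
    have hval : -(P t * S * P t) =
        (-ContinuousLinearMap.mulLeftRight ℝ (H →L[ℂ] H) ↑u⁻¹ ↑u⁻¹) A * P₀ := by
      rw [hP t, hinv, hA]
      simp only [ContinuousLinearMap.neg_apply, ContinuousLinearMap.mulLeftRight_apply]
      noncomm_ring
    have hgoal : HasDerivAt P (-(P t * S * P t)) t := by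
      rw [hval, hPe]; exact h4
    exact hgoal.hasDerivWithinAt
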